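/- (Main preprocessing criterion.) Let f and g be nonzero polynomials in ℂ[x,y]. If Trop(f) ∩ Trop(g) = ∅, then f and g have no common factor which is not a monomial: there is no polynomial r ∈ ℂ[x,y] whose support contains at least two points such that r divides f and r divides g. -/

import Mathlib

open MvPolynomial

/-- The minimal weighted degree `m_{(u,v)}(f) = min { i*u + j*v : (i,j) ∈ supp(f) }`. -/
noncomputable def wdeg (u v : ℤ) (f : MvPolynomial (Fin 2) ℂ) : ℤ :=
  sInf ((fun a : Fin 2 →₀ ℕ => (a 0 : ℤ) * u + (a 1 : ℤ) * v) '' ↑f.support)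

/-- The initial form `in_{(u,v)}(f)`: the sum of the terms of `f` whose exponent
vector attains the minimal weighted degree. -/
noncomputable def initForm (u v : ℤ) (f : MvPolynomial (Fin 2) ℂ) :
    MvPolynomial (Fin 2) ℂ :=
  ∑ a ∈ f.support.filter (fun a => (a 0 : ℤ) * u + (a 1 : ℤ) * v = wdeg u v f),
    monomial a (f.coeff a)

/-- The tropicalization `Trop(f)`: nonzero integer vectors `(u,v)` such that the
initial form `in_{(u,v)}(f)` has at least two monomials. -/
def trop (f : MvPolynomial (Fin 2) ℂ) : Set (ℤ × ℤ) :=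
  { uv | uv ≠ (0, 0) ∧ 2 ≤ (initForm uv.1 uv.2 f).support.card }

/-! ### Auxiliary machinery -/

/-- The weight functional. -/
def wt (u v : ℤ) (a : Fin 2 →₀ ℕ) : ℤ := (a 0 : ℤ) * u + (a 1 : ℤ) * v

lemma wt_add (u v : ℤ) (a b : Fin 2 →₀ ℕ) : wt u v (a + b) = wt u v a + wt u v b := by
  simp only [wt, Finsupp.add_apply]
  push_cast
  ring

lemma wdeg_def (u v : ℤ) (f : MvPolynomial (Fin 2) ℂ) :
    wdeg u v f = sInf (wt u v '' ↑f.support) := rfl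

lemma wdeg_le {u v : ℤ} {f : MvPolynomial (Fin 2) ℂ} {a : Fin 2 →₀ ℕ}
    (ha : a ∈ f.support) : wdeg u v f ≤ wt u v a := by
  rw [wdeg_def]
  exact csInf_le ((f.support.finite_toSet.image _).bddBelow) ⟨a, ha, rfl⟩

lemma le_wdeg {u v c : ℤ} {f : MvPolynomial (Fin 2) ℂ} (hf : f ≠ 0)
    (h : ∀ a ∈ f.support, c ≤ wt u v a) : c ≤ wdeg u v f := by
  rw [wdeg_def]
  obtain ⟨a, ha⟩ := support_nonempty.2 hf
  refine le_csInf ⟨wt u v a, a, ha, rfl⟩ ?_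
  rintro _ ⟨b, hb, rfl⟩
  exact h b hb

lemma exists_wdeg {u v : ℤ} {f : MvPolynomial (Fin 2) ℂ} (hf : f ≠ 0) :
    ∃ a ∈ f.support, wt u v a = wdeg u v f := by
  obtain ⟨a, ha⟩ := support_nonempty.2 hf
  have hmem : wdeg u v f ∈ wt u v '' ↑f.support := by
    rw [wdeg_def]
    exact Set.Nonempty.csInf_mem ⟨wt u v a, a, ha, rfl⟩ (f.support.finite_toSet.image _)
  obtain ⟨b, hb, hwb⟩ := hmem
  exact ⟨b, hb, hwb⟩

lemma coeff_initForm (u v : ℤ) (f : MvPolynomial (Fin 2) ℂ) (b : Fin 2 →₀ ℕ) :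
    coeff b (initForm u v f)
      = if b ∈ f.support ∧ wt u v b = wdeg u v f then coeff b f else 0 := by
  rw [initForm, coeff_sum]
  simp_rw [coeff_monomial]
  rw [Finset.sum_ite_eq']
  simp [Finset.mem_filter, wt, and_comm]

lemma support_initForm (u v : ℤ) (f : MvPolynomial (Fin 2) ℂ) :
    (initForm u v f).support = f.support.filter (fun a => wt u v a = wdeg u v f) := by
  ext b
  rw [mem_support_iff, coeff_initForm]
  constructor
  · intro hb
    by_cases h : b ∈ f.support ∧ wt u v b = wdeg u v f
    · exact Finset.mem_filter.2 ⟨h.1, h.2⟩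
    · rw [if_neg h] at hb
      exact absurd rfl hb
  · intro hb
    obtain ⟨h1, h2⟩ := Finset.mem_filter.1 hb
    rw [if_pos ⟨h1, h2⟩]
    exact mem_support_iff.1 h1

lemma initForm_ne_zero {u v : ℤ} {f : MvPolynomial (Fin 2) ℂ} (hf : f ≠ 0) :
    initForm u v f ≠ 0 := by
  obtain ⟨a, ha, hwa⟩ := exists_wdeg (u := u) (v := v) hf
  rw [← support_nonempty]
  exact ⟨a, by rw [support_initForm, Finset.mem_filter]; exact ⟨ha, hwa⟩⟩

lemma coeff_mul_face {u v : ℤ} (p q : MvPolynomial (Fin 2) ℂ) {b : Fin 2 →₀ ℕ}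
    (hb : wt u v b = wdeg u v p + wdeg u v q) :
    coeff b (p * q) = coeff b (initForm u v p * initForm u v q) := by
  rw [coeff_mul, coeff_mul]
  refine Finset.sum_congr rfl ?_
  rintro ⟨x, y⟩ hxy
  rw [Finset.HasAntidiagonal.mem_antidiagonal] at hxy
  by_cases hx : x ∈ p.support
  · by_cases hy : y ∈ q.support
    · have h1 : wdeg u v p ≤ wt u v x := wdeg_le hx
      have h2 : wdeg u v q ≤ wt u v y := wdeg_le hy
      have hsum : wt u v x + wt u v y = wdeg u v p + wdeg u v q := by
        rw [← wt_add, hxy, hb]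
      have ex : wt u v x = wdeg u v p := by omega
      have ey : wt u v y = wdeg u v q := by omega
      rw [coeff_initForm, coeff_initForm, if_pos ⟨hx, ex⟩, if_pos ⟨hy, ey⟩]
    · rw [notMem_support_iff.1 hy, coeff_initForm u v q y, if_neg (fun h => hy h.1)]
      ring
  · rw [notMem_support_iff.1 hx, coeff_initForm u v p x, if_neg (fun h => hx h.1)]
    ring

lemma wt_of_mem_initMul {u v : ℤ} {p q : MvPolynomial (Fin 2) ℂ} {b : Fin 2 →₀ ℕ}
    (hb : b ∈ (initForm u v p * initForm u v q).support) :
    wt u v b = wdeg u v p + wdeg u v q := by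
  obtain ⟨x, hx, y, hy, hxy⟩ := Finset.mem_add.1 (MvPolynomial.support_mul _ _ hb)
  rw [support_initForm, Finset.mem_filter] at hx hy
  rw [← hxy, wt_add, hx.2, hy.2]

lemma wdeg_mul {u v : ℤ} {p q : MvPolynomial (Fin 2) ℂ} (hp : p ≠ 0) (hq : q ≠ 0) :
    wdeg u v (p * q) = wdeg u v p + wdeg u v q := by
  have hm : initForm u v p * initForm u v q ≠ 0 :=
    mul_ne_zero (initForm_ne_zero hp) (initForm_ne_zero hq)
  obtain ⟨b, hb⟩ := support_nonempty.2 hm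
  have hwb := wt_of_mem_initMul hb
  have hcoeff : b ∈ (p * q).support := by
    rw [mem_support_iff, coeff_mul_face p q hwb]
    exact mem_support_iff.1 hb
  refine le_antisymm (hwb ▸ wdeg_le hcoeff) ?_
  refine le_wdeg (mul_ne_zero hp hq) ?_
  intro a ha
  obtain ⟨x, hx, y, hy, hxy⟩ := Finset.mem_add.1 (MvPolynomial.support_mul _ _ ha)
  have h1 : wdeg u v p ≤ wt u v x := wdeg_le hx
  have h2 : wdeg u v q ≤ wt u v y := wdeg_le hy
  rw [← hxy, wt_add]
  omega

lemma initForm_mul {u v : ℤ} {p q : MvPolynomial (Fin 2) ℂ} (hp : p ≠ 0) (hq : q ≠ 0) :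
    initForm u v (p * q) = initForm u v p * initForm u v q := by
  have hw := wdeg_mul (u := u) (v := v) hp hq
  ext b
  rw [coeff_initForm]
  by_cases hb : wt u v b = wdeg u v p + wdeg u v q
  · rw [← coeff_mul_face p q hb]
    by_cases hbs : b ∈ (p * q).support
    · rw [if_pos ⟨hbs, by rw [hw]; exact hb⟩]
    · rw [if_neg (fun h => hbs h.1), notMem_support_iff.1 hbs]
  · rw [if_neg (fun h => hb (by rw [← hw]; exact h.2))]
    have : coeff b (initForm u v p * initForm u v q) = 0 := by
      by_contra h
      exact hb (wt_of_mem_initMul (mem_support_iff.2 h))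
    exact this.symm

lemma two_le_card_support_mul {A B : MvPolynomial (Fin 2) ℂ} (hA : A ≠ 0) (hB : B ≠ 0)
    (h2 : 2 ≤ A.support.card) : 2 ≤ (A * B).support.card := by
  obtain ⟨x, hx, y, hy, hxy⟩ := Finset.one_lt_card.1 h2
  set M : ℤ := ((A.support.sup fun a => a 0 : ℕ) : ℤ) + 1 with hMdef
  have hMb : ∀ a ∈ A.support, (a 0 : ℤ) < M := by
    intro a ha
    have h : a 0 ≤ A.support.sup fun a => a 0 := Finset.le_sup (f := fun a : Fin 2 →₀ ℕ => a 0) ha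
    omega
  have hM0 : 0 < M := by omega
  have hinj : wt 1 M x ≠ wt 1 M y := by
    intro h
    simp only [wt, mul_one] at h
    have hx0 := hMb x hx
    have hy0 := hMb y hy
    have hx0' : (0 : ℤ) ≤ (x 0 : ℤ) := Int.ofNat_nonneg _
    have hy0' : (0 : ℤ) ≤ (y 0 : ℤ) := Int.ofNat_nonneg _
    -- x0 + x1*M = y0 + y1*M with 0 ≤ x0,y0 < M forces equality
    have hmod : (x 0 : ℤ) = (y 0 : ℤ) := by
      have e1 : ((x 0 : ℤ) + (x 1 : ℤ) * M) % M = (x 0 : ℤ) % M :=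
        by rw [Int.add_mul_emod_self_right]
      have e2 : ((y 0 : ℤ) + (y 1 : ℤ) * M) % M = (y 0 : ℤ) % M :=
        by rw [Int.add_mul_emod_self_right]
      have ex : (x 0 : ℤ) % M = (x 0 : ℤ) := Int.emod_eq_of_lt hx0' hx0
      have ey : (y 0 : ℤ) % M = (y 0 : ℤ) := Int.emod_eq_of_lt hy0' hy0
      rw [← ex, ← ey, ← e1, ← e2, h]
    have hmul : (x 1 : ℤ) * M = (y 1 : ℤ) * M := by omega
    have h1 : (x 1 : ℤ) = (y 1 : ℤ) := mul_right_cancel₀ (by omega) hmul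
    apply hxy
    ext i
    have h00 : x 0 = y 0 := by exact_mod_cast hmod
    have h11 : x 1 = y 1 := by exact_mod_cast h1
    fin_cases i
    · exact h00
    · exact h11
  have hAB : A * B ≠ 0 := mul_ne_zero hA hB
  obtain ⟨b, hbs, hbw⟩ := exists_wdeg (u := 1) (v := M) hAB
  obtain ⟨c, hcs, hcw⟩ := exists_wdeg (u := -1) (v := -M) hAB
  refine Finset.one_lt_card.2 ⟨b, hbs, c, hcs, ?_⟩
  intro he
  have hneg : ∀ a : Fin 2 →₀ ℕ, wt (-1) (-M) a = - wt 1 M a := by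
    intro a; simp only [wt]; ring
  have e1 : wdeg 1 M (A * B) = wdeg 1 M A + wdeg 1 M B := wdeg_mul hA hB
  have e2 : wdeg (-1) (-M) (A * B) = wdeg (-1) (-M) A + wdeg (-1) (-M) B := wdeg_mul hA hB
  have l1 : wdeg 1 M A ≤ wt 1 M x := wdeg_le hx
  have l1' : wdeg 1 M A ≤ wt 1 M y := wdeg_le hy
  have l2 : wdeg (-1) (-M) A ≤ - wt 1 M x := (hneg x) ▸ wdeg_le hx
  have l2' : wdeg (-1) (-M) A ≤ - wt 1 M y := (hneg y) ▸ wdeg_le hy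
  obtain ⟨z, hz⟩ := support_nonempty.2 hB
  have m1 : wdeg 1 M B ≤ wt 1 M z := wdeg_le hz
  have m2 : wdeg (-1) (-M) B ≤ - wt 1 M z := (hneg z) ▸ wdeg_le hz
  have h0 : wt (-1) (-M) b = - wt 1 M b := hneg b
  rw [← he] at hcw
  omega

lemma exists_trop {r : MvPolynomial (Fin 2) ℂ} (h2 : 2 ≤ r.support.card) :
    ∃ w : ℤ × ℤ, w ∈ trop r := by
  have hr : r ≠ 0 := by
    intro h
    rw [h] at h2
    simp at h2
  set S := r.support with hS
  set K : ℤ := ((S.sup fun a => a 1 : ℕ) : ℤ) + 1 with hKdef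
  have hKb : ∀ a ∈ S, (a 1 : ℤ) < K := by
    intro a ha
    have h : a 1 ≤ S.sup fun a => a 1 := Finset.le_sup (f := fun a : Fin 2 →₀ ℕ => a 1) ha
    omega
  have hSne : S.Nonempty := support_nonempty.2 hr
  have hK0 : 0 < K := by omega
  obtain ⟨t, ht, htmin⟩ := S.exists_min_image (fun a => (a 0 : ℤ) * K + (a 1 : ℤ)) hSne
  -- lexicographic minimality
  have hlex : ∀ s ∈ S, s ≠ t → (t 0 : ℤ) < s 0 ∨ ((t 0 : ℤ) = s 0 ∧ (t 1 : ℤ) < s 1) := by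
    intro s hs hst
    have hmin := htmin s hs
    have ht1 := hKb t ht
    have hs1 := hKb s hs
    have ht1' : (0 : ℤ) ≤ (t 1 : ℤ) := Int.ofNat_nonneg _
    have hs1' : (0 : ℤ) ≤ (s 1 : ℤ) := Int.ofNat_nonneg _
    rcases lt_trichotomy ((t 0 : ℤ)) ((s 0 : ℤ)) with h | h | h
    · exact Or.inl h
    · right
      refine ⟨h, ?_⟩
      rw [h] at hmin
      have hle : (t 1 : ℤ) ≤ (s 1 : ℤ) := by linarith
      rcases hle.lt_or_eq with hlt | heq
      · exact hlt
      · exfalso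
        apply hst
        ext i
        have h00 : s 0 = t 0 := by exact_mod_cast h.symm
        have h11 : s 1 = t 1 := by exact_mod_cast heq.symm
        fin_cases i
        · exact h00
        · exact h11
    · exfalso
      have hm : ((s 0 : ℤ) + 1) * K ≤ (t 0 : ℤ) * K :=
        mul_le_mul_of_nonneg_right (by omega) (le_of_lt hK0)
      nlinarith
  -- choose the edge direction by minimizing the slope
  set S' := S.erase t with hS'
  have hS'ne : S'.Nonempty := by
    rw [← Finset.card_pos, hS', Finset.card_erase_of_mem ht]
    omega
  set key : (Fin 2 →₀ ℕ) → WithTop ℚ := fun s =>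
    if (s 0 : ℤ) = (t 0 : ℤ) then ⊤
    else ((((s 1 : ℚ) - (t 1 : ℚ)) / ((s 0 : ℚ) - (t 0 : ℚ)) : ℚ) : WithTop ℚ) with hkey
  obtain ⟨m, hm, hmmin⟩ := S'.exists_min_image key hS'ne
  have hmt : m ≠ t := (Finset.mem_erase.1 hm).1
  have hmS : m ∈ S := (Finset.mem_erase.1 hm).2
  set d1 : ℤ := (m 0 : ℤ) - (t 0 : ℤ) with hd1def
  set d2 : ℤ := (m 1 : ℤ) - (t 1 : ℤ) with hd2def
  have hd : 0 < d1 ∨ (d1 = 0 ∧ 0 < d2) := by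
    rcases hlex m hmS hmt with h | ⟨h, h'⟩
    · left; omega
    · right; omega
  have key_ineq : ∀ s ∈ S', 0 ≤ d1 * ((s 1 : ℤ) - (t 1 : ℤ)) - d2 * ((s 0 : ℤ) - (t 0 : ℤ)) := by
    intro s hs
    have hsS : s ∈ S := (Finset.mem_erase.1 hs).2
    have hst : s ≠ t := (Finset.mem_erase.1 hs).1
    have he : 0 < (s 0 : ℤ) - (t 0 : ℤ) ∨
        ((s 0 : ℤ) - (t 0 : ℤ) = 0 ∧ 0 < (s 1 : ℤ) - (t 1 : ℤ)) := by
      rcases hlex s hsS hst with h | ⟨h, h'⟩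
      · left; omega
      · right; omega
    have hk := hmmin s hs
    rw [hkey] at hk
    simp only at hk
    rcases hd with hd1 | ⟨hd1, hd2⟩
    · rcases he with he1 | ⟨he1, he2⟩
      · -- both slopes finite
        have hm0 : ¬ ((m 0 : ℤ) = (t 0 : ℤ)) := by omega
        have hs0 : ¬ ((s 0 : ℤ) = (t 0 : ℤ)) := by omega
        rw [if_neg hm0, if_neg hs0] at hk
        have hk' : (((m 1 : ℚ) - (t 1 : ℚ)) / ((m 0 : ℚ) - (t 0 : ℚ)) : ℚ)
            ≤ (((s 1 : ℚ) - (t 1 : ℚ)) / ((s 0 : ℚ) - (t 0 : ℚ)) : ℚ) :=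
          WithTop.coe_le_coe.1 hk
        have hmZ : (t 0 : ℤ) < (m 0 : ℤ) := by omega
        have hsZ : (t 0 : ℤ) < (s 0 : ℤ) := by omega
        have hmN : t 0 < m 0 := by exact_mod_cast hmZ
        have hsN : t 0 < s 0 := by exact_mod_cast hsZ
        have hmden : (0 : ℚ) < (m 0 : ℚ) - (t 0 : ℚ) := by
          have : ((t 0 : ℕ) : ℚ) < ((m 0 : ℕ) : ℚ) := by exact_mod_cast hmN
          linarith
        have hsden : (0 : ℚ) < (s 0 : ℚ) - (t 0 : ℚ) := by
          have : ((t 0 : ℕ) : ℚ) < ((s 0 : ℕ) : ℚ) := by exact_mod_cast hsN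
          linarith
        rw [div_le_div_iff₀ hmden hsden] at hk'
        have hZ : ((m 1 : ℤ) - (t 1 : ℤ)) * ((s 0 : ℤ) - (t 0 : ℤ))
            ≤ ((s 1 : ℤ) - (t 1 : ℤ)) * ((m 0 : ℤ) - (t 0 : ℤ)) := by
          exact_mod_cast hk'
        rw [hd1def, hd2def]
        linarith [hZ]
      · -- vertical comparison point
        have z1 : (0 : ℤ) < d1 * ((s 1 : ℤ) - (t 1 : ℤ)) := mul_pos hd1 he2
        have z2 : d2 * ((s 0 : ℤ) - (t 0 : ℤ)) = 0 := mul_eq_zero_of_right _ he1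
        linarith
    · -- d1 = 0, so the minimal slope is vertical
      have hm0 : (m 0 : ℤ) = (t 0 : ℤ) := by omega
      rw [if_pos hm0, top_le_iff] at hk
      by_cases hs0 : (s 0 : ℤ) = (t 0 : ℤ)
      · have z1 : d1 * ((s 1 : ℤ) - (t 1 : ℤ)) = 0 := mul_eq_zero_of_left hd1 _
        have z2 : d2 * ((s 0 : ℤ) - (t 0 : ℤ)) = 0 :=
          mul_eq_zero_of_right _ (by omega)
        linarith
      · rw [if_neg hs0] at hk
        exact absurd hk WithTop.coe_ne_top
  -- the direction
  refine ⟨(-d2, d1), ?_, ?_⟩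
  · intro h
    rw [Prod.mk.injEq] at h
    rcases hd with h1 | ⟨h1, h2⟩ <;> omega
  · -- show 2 ≤ card of support of initForm (-d2) d1 r
    have hwt : ∀ a : Fin 2 →₀ ℕ, wt (-d2) d1 a = (a 0 : ℤ) * (-d2) + (a 1 : ℤ) * d1 := fun a => rfl
    have hbound : ∀ s ∈ S, wt (-d2) d1 t ≤ wt (-d2) d1 s := by
      intro s hs
      by_cases hst : s = t
      · rw [hst]
      · have := key_ineq s (Finset.mem_erase.2 ⟨hst, hs⟩)
        rw [hwt, hwt]
        nlinarith
    have hweq : wdeg (-d2) d1 r = wt (-d2) d1 t :=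
      le_antisymm (wdeg_le ht) (le_wdeg hr hbound)
    have hmeq : wt (-d2) d1 m = wt (-d2) d1 t := by
      rw [hwt, hwt]
      have e1 : (m 0 : ℤ) = (t 0 : ℤ) + d1 := by omega
      have e2 : (m 1 : ℤ) = (t 1 : ℤ) + d2 := by omega
      rw [e1, e2]
      ring
    refine Finset.one_lt_card.2 ⟨t, ?_, m, ?_, fun h => hmt h.symm⟩
    · rw [support_initForm, Finset.mem_filter]
      exact ⟨ht, hweq.symm⟩
    · rw [support_initForm, Finset.mem_filter]
      exact ⟨hmS, by rw [hmeq, hweq]⟩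

lemma trop_dvd {r f : MvPolynomial (Fin 2) ℂ} (hf : f ≠ 0) (hdvd : r ∣ f)
    {w : ℤ × ℤ} (hw : w ∈ trop r) : w ∈ trop f := by
  obtain ⟨s, rfl⟩ := hdvd
  have hr : r ≠ 0 := fun h => hf (by rw [h, zero_mul])
  have hs : s ≠ 0 := fun h => hf (by rw [h, mul_zero])
  obtain ⟨hw0, hw2⟩ := hw
  refine ⟨hw0, ?_⟩
  rw [initForm_mul hr hs]
  exact two_le_card_support_mul (initForm_ne_zero hr) (initForm_ne_zero hs) hw2

/-- Main preprocessing criterion: if the tropicalizations of `f` and `g` are disjoint,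
then `f` and `g` have no common factor that is not a monomial. -/
theorem no_common_factor (f g : MvPolynomial (Fin 2) ℂ) (hf : f ≠ 0) (hg : g ≠ 0)
    (htrop : trop f ∩ trop g = ∅) :
    ¬ ∃ r : MvPolynomial (Fin 2) ℂ, 2 ≤ r.support.card ∧ r ∣ f ∧ r ∣ g := by
  rintro ⟨r, hr2, hrf, hrg⟩
  obtain ⟨w, hw⟩ := exists_trop hr2
  have hwf : w ∈ trop f := trop_dvd hf hrf hw
  have hwg : w ∈ trop g := trop_dvd hg hrg hw
  have : w ∈ trop f ∩ trop g := ⟨hwf, hwg⟩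
  rw [htrop] at this
  exact this
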